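/- arXiv:1905.05817 — 5 statements merged into one kernel-verified Lean document; each statement's English description precedes it below -/
import Mathlib

section
/- Let $\mathcal{U}, \mathcal{Y}$ be real Hilbert spaces, $\mathcal{T} \subset \mathcal{Y}$ a closed subspace with orthogonal projection $\Pi_{\mathcal{T}}$, $\lambda > 0$, and $\mathcal{H}^0 \subset \mathcal{U} \times \mathcal{Y}$ a subspace. Define $A((u,y),(u,y)) = \|u\|_{\mathcal{U}}^2 + \lambda \|\Pi_{\mathcal{T}} y\|_{\mathcal{Y}}^2$. Suppose $\overline{\eta} := \sup_{(u,y)\in\mathcal{H}^0, u \neq 0} \|y\|/\|u\| < \infty$ and $\kappa := \inf_{(u,y)\in\mathcal{H}^0, y \neq 0} \|\Pi_{\mathcal{T}} y\|/\|y\| \geq 0$. If $\lambda \kappa^2 \leq 1$, then for all $(u,y) \in \mathcal{H}^0$: $A((u,y),(u,y)) \geq \frac{1 + \lambda \kappa^2 \overline{\eta}^2}{1 + \overline{\eta}^2} (\|u\|^2 + \|y\|^2)$. -/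
/-- coercivity lower bound for A on H⁰ in the case λκ² ≤ 1. -/
theorem stmt1 {U Y : Type*}
    [NormedAddCommGroup U] [InnerProductSpace ℝ U]
    [NormedAddCommGroup Y] [InnerProductSpace ℝ Y]
    (T : Submodule ℝ Y) [T.HasOrthogonalProjection]
    (H0 : Submodule ℝ (U × Y))
    (lam : ℝ) (hlam : 0 < lam)
    (etaBar kappa : ℝ) (hetaBar : 0 < etaBar) (hkappa : 0 ≤ kappa)
    (hEta : ∀ p ∈ H0, ‖p.2‖ ≤ etaBar * ‖p.1‖)
    (hKap : ∀ p ∈ H0, kappa * ‖p.2‖ ≤ ‖(T.orthogonalProjectionOnto p.2 : Y)‖)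
    (hcase : lam * kappa ^ 2 ≤ 1) :
    ∀ p ∈ H0,
      (1 + lam * kappa ^ 2 * etaBar ^ 2) / (1 + etaBar ^ 2) * (‖p.1‖ ^ 2 + ‖p.2‖ ^ 2)
        ≤ ‖p.1‖ ^ 2 + lam * ‖(T.orthogonalProjectionOnto p.2 : Y)‖ ^ 2 := by
  intro p hp
  have h1 := hEta p hp
  have h2 := hKap p hp
  have hb : (0:ℝ) ≤ ‖p.2‖ := norm_nonneg _
  have ha : (0:ℝ) ≤ ‖p.1‖ := norm_nonneg _
  have hc : (0:ℝ) ≤ ‖(T.orthogonalProjectionOnto p.2 : Y)‖ := norm_nonneg _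
  rw [div_mul_eq_mul_div, div_le_iff₀ (by positivity)]
  have hbb : ‖p.2‖ ^ 2 ≤ etaBar ^ 2 * ‖p.1‖ ^ 2 := by
    have := mul_le_mul h1 h1 hb (by positivity)
    nlinarith
  have hcc : lam * kappa ^ 2 * ‖p.2‖ ^ 2 ≤ lam * ‖(T.orthogonalProjectionOnto p.2 : Y)‖ ^ 2 := by
    have := mul_le_mul h2 h2 (by positivity) hc
    nlinarith
  have key : 0 ≤ (1 - lam * kappa ^ 2) * (etaBar ^ 2 * ‖p.1‖ ^ 2 - ‖p.2‖ ^ 2) :=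
    mul_nonneg (by linarith) (by linarith)
  nlinarith [sq_nonneg etaBar]
end

section
/- In the same setting, suppose additionally $\underline{\eta} := \inf_{(u,y)\in\mathcal{H}^0, u\neq 0} \|y\|/\|u\| \geq 0$ and $\lambda \kappa^2 > 1$. Then for all $(u,y) \in \mathcal{H}^0$: $\|u\|_{\mathcal{U}}^2 + \lambda \|\Pi_{\mathcal{T}} y\|_{\mathcal{Y}}^2 \geq \frac{1 + \lambda \kappa^2 \underline{\eta}^2}{1 + \underline{\eta}^2} (\|u\|^2 + \|y\|^2)$. -/
/-- coercivity lower bound for A on H⁰ in the case λκ² > 1. -/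
theorem stmt2 {U Y : Type*}
    [NormedAddCommGroup U] [InnerProductSpace ℝ U]
    [NormedAddCommGroup Y] [InnerProductSpace ℝ Y]
    (T : Submodule ℝ Y) [T.HasOrthogonalProjection]
    (H0 : Submodule ℝ (U × Y))
    (lam : ℝ) (hlam : 0 < lam)
    (etaUnd kappa : ℝ) (hetaUnd : 0 ≤ etaUnd) (hkappa : 0 < kappa)
    (hEta : ∀ p ∈ H0, etaUnd * ‖p.1‖ ≤ ‖p.2‖)
    (hKap : ∀ p ∈ H0, kappa * ‖p.2‖ ≤ ‖(T.orthogonalProjectionOnto p.2 : Y)‖)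
    (hcase : 1 < lam * kappa ^ 2) :
    ∀ p ∈ H0,
      (1 + lam * kappa ^ 2 * etaUnd ^ 2) / (1 + etaUnd ^ 2) * (‖p.1‖ ^ 2 + ‖p.2‖ ^ 2)
        ≤ ‖p.1‖ ^ 2 + lam * ‖(T.orthogonalProjectionOnto p.2 : Y)‖ ^ 2 := by
  intro p hp
  have h1 := hEta p hp
  have h2 := hKap p hp
  set a := ‖p.1‖ with ha
  set b := ‖p.2‖ with hb
  set c := ‖(T.orthogonalProjectionOnto p.2 : Y)‖ with hc
  have ha0 : 0 ≤ a := norm_nonneg _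
  have hb0 : 0 ≤ b := norm_nonneg _
  have hc0 : 0 ≤ c := norm_nonneg _
  have hd : (0:ℝ) < 1 + etaUnd ^ 2 := by positivity
  rw [div_mul_eq_mul_div, div_le_iff₀ hd]
  have hle : etaUnd ^ 2 * a ^ 2 ≤ b ^ 2 := by nlinarith [mul_le_mul h1 h1 (by positivity : (0:ℝ) ≤ etaUnd * a) hb0]
  have hle2 : kappa ^ 2 * b ^ 2 ≤ c ^ 2 := by nlinarith [mul_le_mul h2 h2 (by positivity : (0:ℝ) ≤ kappa * b) hc0]
  nlinarith [mul_le_mul_of_nonneg_left hle2 hlam.le]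
end

section
/- Let $\mathcal{U}, \mathcal{Y}$ be real Hilbert spaces, $\mathcal{T} \subset \mathcal{Y}$ a closed subspace, $a$ coercive on $\mathcal{Y}$ with constant $\alpha > 0$, $b$ bounded with constant $\gamma_b$, and $\lambda > 0$. Suppose $(e_u, e_y, e_d, e_p) \in \mathcal{U}\times\mathcal{Y}\times\mathcal{Y}\times\mathcal{T}$ solves the error system: $\langle e_u,\phi\rangle - b(\phi,e_p) = r_u(\phi)$ for all $\phi\in\mathcal{U}$; $a(\psi,e_p) - \lambda\langle e_d,\psi\rangle = r_p(\psi)$ for all $\psi\in\mathcal{Y}$; $a(e_y,\psi) - b(e_u,\psi) = r_y(\psi)$ for all $\psi\in\mathcal{Y}$; $\langle e_y + e_d, \tau\rangle = 0$ for all $\tau\in\mathcal{T}$. Then $\|e_u\|^2 + \lambda\|e_d\|^2 \leq (\|r_u\| + \frac{\gamma_b}{\alpha}\|r_p\|)\|e_u\| + \frac{2}{\alpha}\|r_p\|\|r_y\| + \frac{\lambda}{\alpha}\|r_y\|\|e_d\|$. -/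
set_option maxHeartbeats 1000000


/-- key intermediate inequality for the error system. -/
theorem stmt10 {U Y : Type*}
    [NormedAddCommGroup U] [InnerProductSpace ℝ U]
    [NormedAddCommGroup Y] [InnerProductSpace ℝ Y]
    (T : Submodule ℝ Y)
    (a : Y →ₗ[ℝ] Y →ₗ[ℝ] ℝ) (b : U →ₗ[ℝ] Y →ₗ[ℝ] ℝ)
    (α : ℝ) (hα : 0 < α) (hcoer : ∀ y : Y, α * ‖y‖ ^ 2 ≤ a y y)
    (γb : ℝ) (hb : ∀ (u : U) (ψ : Y), |b u ψ| ≤ γb * ‖u‖ * ‖ψ‖)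
    (lam : ℝ) (hlam : 0 < lam)
    (e_u : U) (e_y e_d e_p : Y) (hed : e_d ∈ T)
    (r_u : U →L[ℝ] ℝ) (r_p r_y : Y →L[ℝ] ℝ)
    (h1 : ∀ φ : U, (inner ℝ e_u φ : ℝ) - b φ e_p = r_u φ)
    (h2 : ∀ ψ : Y, a ψ e_p - lam * (inner ℝ e_d ψ : ℝ) = r_p ψ)
    (h3 : ∀ ψ : Y, a e_y ψ - b e_u ψ = r_y ψ)
    (h4 : ∀ τ ∈ T, (inner ℝ (e_y + e_d) τ : ℝ) = 0) :
    ‖e_u‖ ^ 2 + lam * ‖e_d‖ ^ 2 ≤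
      (‖r_u‖ + (γb / α) * ‖r_p‖) * ‖e_u‖ +
        (2 / α) * ‖r_p‖ * ‖r_y‖ + (lam / α) * ‖r_y‖ * ‖e_d‖ := by
  rcases subsingleton_or_nontrivial Y with hY | hY
  · -- Y is trivial: all Y-objects vanish.
    have hp0 : e_p = (0 : Y) := Subsingleton.elim _ _
    have hd0 : e_d = (0 : Y) := Subsingleton.elim _ _
    have hrp0 : r_p = 0 := by
      ext ψ; rw [Subsingleton.elim ψ (0 : Y)]; simp
    have hry0 : r_y = 0 := by
      ext ψ; rw [Subsingleton.elim ψ (0 : Y)]; simp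
    have h1u := h1 e_u
    rw [hp0] at h1u
    simp only [map_zero] at h1u
    have key : ‖e_u‖ ^ 2 = r_u e_u := by
      rw [← real_inner_self_eq_norm_sq]; linarith
    have hru : r_u e_u ≤ ‖r_u‖ * ‖e_u‖ := by
      calc r_u e_u ≤ |r_u e_u| := le_abs_self _
        _ = ‖r_u e_u‖ := (Real.norm_eq_abs _).symm
        _ ≤ ‖r_u‖ * ‖e_u‖ := r_u.le_opNorm e_u
    rw [hd0, hrp0, hry0]
    simp only [norm_zero, norm_zero]
    nlinarith [key, hru]
  · -- Y is nontrivial.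
    obtain ⟨ψ0, hψ0⟩ := exists_ne (0 : Y)
    have hψ0pos : 0 < ‖ψ0‖ := norm_pos_iff.mpr hψ0
    -- γb * ‖e_u‖ is nonnegative
    have hγ : 0 ≤ γb * ‖e_u‖ := by
      rcases eq_or_ne e_u 0 with h | h
      · simp [h]
      · have h1 := (abs_nonneg (b e_u ψ0)).trans (hb e_u ψ0)
        nlinarith
    -- key identity
    have hinner : (inner ℝ e_d e_y : ℝ) = -(‖e_d‖ ^ 2) := by
      have := h4 e_d hed
      rw [inner_add_left] at this
      have h2 : (inner ℝ e_d e_d : ℝ) = ‖e_d‖ ^ 2 := real_inner_self_eq_norm_sq e_d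
      have hc : (inner ℝ e_d e_y : ℝ) = (inner ℝ e_y e_d : ℝ) := real_inner_comm e_y e_d
      linarith
    have h1u := h1 e_u
    have h2y := h2 e_y
    have h3p := h3 e_p
    have hself : (inner ℝ e_u e_u : ℝ) = ‖e_u‖ ^ 2 := real_inner_self_eq_norm_sq e_u
    have key : ‖e_u‖ ^ 2 + lam * ‖e_d‖ ^ 2 = r_u e_u + r_p e_y - r_y e_p := by
      rw [hinner] at h2y
      rw [hself] at h1u
      linarith
    -- bound on ‖e_y‖
    have hry_ey : r_y e_y ≤ ‖r_y‖ * ‖e_y‖ :=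
      (le_abs_self _).trans ((Real.norm_eq_abs _ ▸ r_y.le_opNorm e_y))
    have hbey : b e_u e_y ≤ γb * ‖e_u‖ * ‖e_y‖ := (le_abs_self _).trans (hb e_u e_y)
    have hy : α * ‖e_y‖ ≤ γb * ‖e_u‖ + ‖r_y‖ := by
      rcases eq_or_ne e_y 0 with h | h
      · simp only [h, norm_zero, mul_zero]
        have := norm_nonneg r_y
        linarith
      · have hpos : 0 < ‖e_y‖ := norm_pos_iff.mpr h
        have h3y := h3 e_y
        have hc := hcoer e_y
        nlinarith
    -- bound on ‖e_p‖
    have hrp_ep : r_p e_p ≤ ‖r_p‖ * ‖e_p‖ :=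
      (le_abs_self _).trans ((Real.norm_eq_abs _ ▸ r_p.le_opNorm e_p))
    have hid : (inner ℝ e_d e_p : ℝ) ≤ ‖e_d‖ * ‖e_p‖ := real_inner_le_norm e_d e_p
    have hp : α * ‖e_p‖ ≤ ‖r_p‖ + lam * ‖e_d‖ := by
      rcases eq_or_ne e_p 0 with h | h
      · simp only [h, norm_zero, mul_zero]
        have := norm_nonneg r_p
        have := norm_nonneg e_d
        nlinarith
      · have hpos : 0 < ‖e_p‖ := norm_pos_iff.mpr h
        have h2p := h2 e_p
        have hc := hcoer e_p
        nlinarith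
    -- final bounds
    have hru : r_u e_u ≤ ‖r_u‖ * ‖e_u‖ :=
      (le_abs_self _).trans ((Real.norm_eq_abs _ ▸ r_u.le_opNorm e_u))
    have hrpy : r_p e_y ≤ ‖r_p‖ * ‖e_y‖ :=
      (le_abs_self _).trans ((Real.norm_eq_abs _ ▸ r_p.le_opNorm e_y))
    have hryp : -(r_y e_p) ≤ ‖r_y‖ * ‖e_p‖ :=
      (neg_le_abs _).trans ((Real.norm_eq_abs _ ▸ r_y.le_opNorm e_p))
    -- multiply hy by ‖r_p‖/α and hp by ‖r_y‖/α
    have hA : ‖r_p‖ * ‖e_y‖ ≤ (γb / α) * ‖r_p‖ * ‖e_u‖ + (1 / α) * ‖r_p‖ * ‖r_y‖ := by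
      have h1 : ‖e_y‖ ≤ (γb * ‖e_u‖ + ‖r_y‖) / α := by
        rw [le_div_iff₀ hα]; linarith
      have h2 := mul_le_mul_of_nonneg_left h1 (norm_nonneg r_p)
      have heq : ‖r_p‖ * ((γb * ‖e_u‖ + ‖r_y‖) / α)
          = (γb / α) * ‖r_p‖ * ‖e_u‖ + (1 / α) * ‖r_p‖ * ‖r_y‖ := by
        field_simp
      linarith [heq ▸ h2]
    have hB : ‖r_y‖ * ‖e_p‖ ≤ (1 / α) * ‖r_p‖ * ‖r_y‖ + (lam / α) * ‖r_y‖ * ‖e_d‖ := by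
      have h1 : ‖e_p‖ ≤ (‖r_p‖ + lam * ‖e_d‖) / α := by
        rw [le_div_iff₀ hα]; linarith
      have h2 := mul_le_mul_of_nonneg_left h1 (norm_nonneg r_y)
      have heq : ‖r_y‖ * ((‖r_p‖ + lam * ‖e_d‖) / α)
          = (1 / α) * ‖r_p‖ * ‖r_y‖ + (lam / α) * ‖r_y‖ * ‖e_d‖ := by
        field_simp
      linarith [heq ▸ h2]
    have final : ‖e_u‖ ^ 2 + lam * ‖e_d‖ ^ 2
        ≤ ‖r_u‖ * ‖e_u‖ + ‖r_p‖ * ‖e_y‖ + ‖r_y‖ * ‖e_p‖ := by linarith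
    calc ‖e_u‖ ^ 2 + lam * ‖e_d‖ ^ 2
        ≤ ‖r_u‖ * ‖e_u‖ + ‖r_p‖ * ‖e_y‖ + ‖r_y‖ * ‖e_p‖ := final
      _ ≤ ‖r_u‖ * ‖e_u‖ + ((γb / α) * ‖r_p‖ * ‖e_u‖ + (1 / α) * ‖r_p‖ * ‖r_y‖)
            + ((1 / α) * ‖r_p‖ * ‖r_y‖ + (lam / α) * ‖r_y‖ * ‖e_d‖) := by linarith
      _ = (‖r_u‖ + (γb / α) * ‖r_p‖) * ‖e_u‖ + (2 / α) * ‖r_p‖ * ‖r_y‖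
            + (lam / α) * ‖r_y‖ * ‖e_d‖ := by ring
end

section
/- Under the hypotheses of the error-system theorem above, the model-correction error satisfies $\|e_u\| \leq \frac{1}{2}p_u + \sqrt{\frac{1}{4}p_u^2 + q_u}$, where $p_u = \|r_u\|_{\mathcal{U}'} + \frac{\gamma_b}{\alpha}\|r_p\|_{\mathcal{Y}'}$ and $q_u = \frac{2}{\alpha}\|r_p\|_{\mathcal{Y}'}\|r_y\|_{\mathcal{Y}'} + \frac{\lambda}{4\alpha^2}\|r_y\|_{\mathcal{Y}'}^2$. -/
/-- Quadratic bound helper: if `x² ≤ p x + q` with `q ≥ 0`, then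
`x ≤ p/2 + √(p²/4 + q)`. -/
lemma quad_bound_aux {x p q : ℝ} (hq : 0 ≤ q) (h : x ^ 2 ≤ p * x + q) :
    x ≤ (1 / 2) * p + Real.sqrt ((1 / 4) * p ^ 2 + q) := by
  have h1 : x - p / 2 ≤ Real.sqrt ((1 / 4) * p ^ 2 + q) := by
    calc x - p / 2 ≤ |x - p / 2| := le_abs_self _
      _ = Real.sqrt ((x - p / 2) ^ 2) := (Real.sqrt_sq_eq_abs _).symm
      _ ≤ Real.sqrt ((1 / 4) * p ^ 2 + q) := Real.sqrt_le_sqrt (by nlinarith)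
  linarith

set_option maxHeartbeats 1600000 in
/-- a posteriori bound for the model-correction error ‖e_u‖. -/
theorem stmt11 {U Y : Type*}
    [NormedAddCommGroup U] [InnerProductSpace ℝ U]
    [NormedAddCommGroup Y] [InnerProductSpace ℝ Y]
    (T : Submodule ℝ Y)
    (a : Y →ₗ[ℝ] Y →ₗ[ℝ] ℝ) (b : U →ₗ[ℝ] Y →ₗ[ℝ] ℝ)
    (α : ℝ) (hα : 0 < α) (hcoer : ∀ y : Y, α * ‖y‖ ^ 2 ≤ a y y)
    (γb : ℝ) (hb : ∀ (u : U) (ψ : Y), |b u ψ| ≤ γb * ‖u‖ * ‖ψ‖)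
    (lam : ℝ) (hlam : 0 < lam)
    (e_u : U) (e_y e_d e_p : Y) (hed : e_d ∈ T)
    (r_u : U →L[ℝ] ℝ) (r_p r_y : Y →L[ℝ] ℝ)
    (h1 : ∀ φ : U, (inner ℝ e_u φ : ℝ) - b φ e_p = r_u φ)
    (h2 : ∀ ψ : Y, a ψ e_p - lam * (inner ℝ e_d ψ : ℝ) = r_p ψ)
    (h3 : ∀ ψ : Y, a e_y ψ - b e_u ψ = r_y ψ)
    (h4 : ∀ τ ∈ T, (inner ℝ (e_y + e_d) τ : ℝ) = 0) :
    ‖e_u‖ ≤ (1 / 2) * (‖r_u‖ + (γb / α) * ‖r_p‖) +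
      Real.sqrt ((1 / 4) * (‖r_u‖ + (γb / α) * ‖r_p‖) ^ 2 +
        ((2 / α) * ‖r_p‖ * ‖r_y‖ + (lam / (4 * α ^ 2)) * ‖r_y‖ ^ 2)) := by
  set Ru := ‖r_u‖ with hRu
  set Rp := ‖r_p‖ with hRp
  set Ry := ‖r_y‖ with hRy
  have hq : (0:ℝ) ≤ (2 / α) * Rp * Ry + (lam / (4 * α ^ 2)) * Ry ^ 2 := by
    have h1 : (0:ℝ) ≤ (2 / α) * Rp * Ry := by positivity
    have h2 : (0:ℝ) ≤ (lam / (4 * α ^ 2)) * Ry ^ 2 := by positivity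
    linarith
  -- basic residual bounds
  have bu : r_u e_u ≤ Ru * ‖e_u‖ :=
    le_trans (le_abs_self _) (by rw [← Real.norm_eq_abs]; exact r_u.le_opNorm e_u)
  have bp : r_p e_y ≤ Rp * ‖e_y‖ :=
    le_trans (le_abs_self _) (by rw [← Real.norm_eq_abs]; exact r_p.le_opNorm e_y)
  have bpp : r_p e_p ≤ Rp * ‖e_p‖ :=
    le_trans (le_abs_self _) (by rw [← Real.norm_eq_abs]; exact r_p.le_opNorm e_p)
  have byy : r_y e_y ≤ Ry * ‖e_y‖ :=
    le_trans (le_abs_self _) (by rw [← Real.norm_eq_abs]; exact r_y.le_opNorm e_y)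
  have byp : -(r_y e_p) ≤ Ry * ‖e_p‖ :=
    le_trans (neg_le_abs _) (by rw [← Real.norm_eq_abs]; exact r_y.le_opNorm e_p)
  have hkey : ‖e_u‖ ^ 2 ≤ (Ru + (γb / α) * Rp) * ‖e_u‖ +
      ((2 / α) * Rp * Ry + (lam / (4 * α ^ 2)) * Ry ^ 2) := by
    by_cases hY : ∃ ψ : Y, ψ ≠ 0
    · -- nontrivial Y : γb * ‖u‖ ≥ 0 for all u
      obtain ⟨ψ0, hψ0⟩ := hY
      have hψ0' : (0:ℝ) < ‖ψ0‖ := norm_pos_iff.mpr hψ0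
      have hγ : ∀ u : U, 0 ≤ γb * ‖u‖ := by
        intro u
        have h := (abs_nonneg (b u ψ0)).trans (hb u ψ0)
        nlinarith
      -- the error identity
      have e1 := h1 e_u
      have e2 := h2 e_y
      have e3 := h3 e_p
      have e4 := h4 e_d hed
      have h5 : (inner ℝ e_d e_y : ℝ) = -‖e_d‖ ^ 2 := by
        rw [inner_add_left] at e4
        have : (inner ℝ e_d e_d : ℝ) = ‖e_d‖ ^ 2 := real_inner_self_eq_norm_sq e_d
        have hsymm := real_inner_comm e_d e_y
        linarith
      rw [h5] at e2
      have hself : (inner ℝ e_u e_u : ℝ) = ‖e_u‖ ^ 2 := real_inner_self_eq_norm_sq e_u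
      have heq : ‖e_u‖ ^ 2 = -(lam * ‖e_d‖ ^ 2) + r_p e_y - r_y e_p + r_u e_u := by
        linarith
      -- bound on ‖e_p‖ : α ‖e_p‖ ≤ lam ‖e_d‖ + Rp
      have hF3 : α * ‖e_p‖ ≤ lam * ‖e_d‖ + Rp := by
        have hc := hcoer e_p
        have hcs : (inner ℝ e_d e_p : ℝ) ≤ ‖e_d‖ * ‖e_p‖ := real_inner_le_norm e_d e_p
        have e2p := h2 e_p
        have hmul : α * ‖e_p‖ ^ 2 ≤ (lam * ‖e_d‖ + Rp) * ‖e_p‖ := by nlinarith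
        rcases (norm_nonneg e_p).eq_or_lt with h0 | h0
        · rw [← h0]
          have : (0:ℝ) ≤ lam * ‖e_d‖ := mul_nonneg hlam.le (norm_nonneg _)
          have : (0:ℝ) ≤ Rp := norm_nonneg _
          linarith
        · exact le_of_mul_le_mul_right (by nlinarith) h0
      -- bound on ‖e_y‖ : α ‖e_y‖ ≤ γb ‖e_u‖ + Ry
      have hF4 : α * ‖e_y‖ ≤ γb * ‖e_u‖ + Ry := by
        have hc := hcoer e_y
        have e3y := h3 e_y
        have hbb : b e_u e_y ≤ γb * ‖e_u‖ * ‖e_y‖ := le_trans (le_abs_self _) (hb e_u e_y)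
        have hmul : α * ‖e_y‖ ^ 2 ≤ (γb * ‖e_u‖ + Ry) * ‖e_y‖ := by nlinarith
        rcases (norm_nonneg e_y).eq_or_lt with h0 | h0
        · rw [← h0]
          have := hγ e_u
          have : (0:ℝ) ≤ Ry := norm_nonneg _
          linarith [hγ e_u]
        · exact le_of_mul_le_mul_right (by nlinarith) h0
      -- polynomial form of the key estimate
      have hpoly : α ^ 2 * ‖e_u‖ ^ 2 ≤ α ^ 2 * Ru * ‖e_u‖ + α * γb * Rp * ‖e_u‖ +
          2 * α * Rp * Ry + lam * Ry ^ 2 / 4 := by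
        have m1 : α * Rp * (α * ‖e_y‖) ≤ α * Rp * (γb * ‖e_u‖ + Ry) :=
          mul_le_mul_of_nonneg_left hF4 (by positivity)
        have m2 : α * Ry * (α * ‖e_p‖) ≤ α * Ry * (lam * ‖e_d‖ + Rp) :=
          mul_le_mul_of_nonneg_left hF3 (by positivity)
        have young : (0:ℝ) ≤ lam * (Ry - 2 * α * ‖e_d‖) ^ 2 :=
          mul_nonneg hlam.le (sq_nonneg _)
        have hsum : ‖e_u‖ ^ 2 ≤ -(lam * ‖e_d‖ ^ 2) + Rp * ‖e_y‖ + Ry * ‖e_p‖ + Ru * ‖e_u‖ := by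
          linarith
        have hsum2 : α ^ 2 * ‖e_u‖ ^ 2 ≤
            α ^ 2 * (-(lam * ‖e_d‖ ^ 2) + Rp * ‖e_y‖ + Ry * ‖e_p‖ + Ru * ‖e_u‖) :=
          mul_le_mul_of_nonneg_left hsum (by positivity)
        nlinarith
      -- divide through by α²
      have hα2 : (0:ℝ) < α ^ 2 := by positivity
      rw [← mul_le_mul_iff_right₀ hα2]
      have hexp : α ^ 2 * ((Ru + γb / α * Rp) * ‖e_u‖ +
          (2 / α * Rp * Ry + lam / (4 * α ^ 2) * Ry ^ 2)) =
          α ^ 2 * Ru * ‖e_u‖ + α * γb * Rp * ‖e_u‖ + 2 * α * Rp * Ry + lam * Ry ^ 2 / 4 := by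
        field_simp
        ring
      rw [hexp]
      exact hpoly
    · -- trivial Y
      push_neg at hY
      have hp0 : e_p = 0 := hY e_p
      have hrp0 : Rp = 0 := by
        rw [hRp, show r_p = 0 from by ext ψ; simp only [hY ψ, map_zero, ContinuousLinearMap.zero_apply], norm_zero]
      have hry0 : Ry = 0 := by
        rw [hRy, show r_y = 0 from by ext ψ; simp only [hY ψ, map_zero, ContinuousLinearMap.zero_apply], norm_zero]
      have e1 := h1 e_u
      rw [hp0] at e1
      simp only [map_zero] at e1
      have hself : (inner ℝ e_u e_u : ℝ) = ‖e_u‖ ^ 2 := real_inner_self_eq_norm_sq e_u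
      rw [hrp0, hry0]
      nlinarith
  exact quad_bound_aux hq hkey
end

section
/- Under the hypotheses of the error-system theorem, the misfit error satisfies $\|e_d\| \leq \frac{1}{2}p_d + \sqrt{\frac{1}{4}p_d^2 + q_d}$ where $p_d = \frac{1}{\alpha}\|r_y\|_{\mathcal{Y}'}$ and $q_d = \frac{2}{\lambda\alpha}\|r_p\|_{\mathcal{Y}'}\|r_y\|_{\mathcal{Y}'} + \frac{1}{4\lambda}(\|r_u\|_{\mathcal{U}'} + \frac{\gamma_b}{\alpha}\|r_p\|_{\mathcal{Y}'})^2$. -/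
set_option maxHeartbeats 2000000 in
/-- a posteriori bound for the misfit error ‖e_d‖. -/
theorem stmt12 {U Y : Type*}
    [NormedAddCommGroup U] [InnerProductSpace ℝ U]
    [NormedAddCommGroup Y] [InnerProductSpace ℝ Y]
    (T : Submodule ℝ Y)
    (a : Y →ₗ[ℝ] Y →ₗ[ℝ] ℝ) (b : U →ₗ[ℝ] Y →ₗ[ℝ] ℝ)
    (α : ℝ) (hα : 0 < α) (hcoer : ∀ y : Y, α * ‖y‖ ^ 2 ≤ a y y)
    (γb : ℝ) (hb : ∀ (u : U) (ψ : Y), |b u ψ| ≤ γb * ‖u‖ * ‖ψ‖)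
    (lam : ℝ) (hlam : 0 < lam)
    (e_u : U) (e_y e_d e_p : Y) (hed : e_d ∈ T)
    (r_u : U →L[ℝ] ℝ) (r_p r_y : Y →L[ℝ] ℝ)
    (h1 : ∀ φ : U, (inner ℝ e_u φ : ℝ) - b φ e_p = r_u φ)
    (h2 : ∀ ψ : Y, a ψ e_p - lam * (inner ℝ e_d ψ : ℝ) = r_p ψ)
    (h3 : ∀ ψ : Y, a e_y ψ - b e_u ψ = r_y ψ)
    (h4 : ∀ τ ∈ T, (inner ℝ (e_y + e_d) τ : ℝ) = 0) :
    ‖e_d‖ ≤ (1 / 2) * ((1 / α) * ‖r_y‖) +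
      Real.sqrt ((1 / 4) * ((1 / α) * ‖r_y‖) ^ 2 +
        ((2 / (lam * α)) * ‖r_p‖ * ‖r_y‖ +
          (1 / (4 * lam)) * (‖r_u‖ + (γb / α) * ‖r_p‖) ^ 2)) := by
  set p : ℝ := (1 / α) * ‖r_y‖ with hp
  set q : ℝ := (2 / (lam * α)) * ‖r_p‖ * ‖r_y‖ +
      (1 / (4 * lam)) * (‖r_u‖ + (γb / α) * ‖r_p‖) ^ 2 with hqdef
  clear_value p q
  have hp0 : 0 ≤ p := by rw [hp]; positivity
  -- inner product facts
  have hiny : (inner ℝ e_d e_y : ℝ) = - ‖e_d‖ ^ 2 := by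
    have hd := h4 e_d hed
    have h6 : (inner ℝ (e_y + e_d) e_d : ℝ) = inner ℝ e_y e_d + inner ℝ e_d e_d :=
      inner_add_left _ _ _
    have h7 : (inner ℝ e_d e_d : ℝ) = ‖e_d‖ ^ 2 := real_inner_self_eq_norm_sq e_d
    have h8 : (inner ℝ e_d e_y : ℝ) = inner ℝ e_y e_d := real_inner_comm _ _
    linarith
  have hinu : (inner ℝ e_u e_u : ℝ) = ‖e_u‖ ^ 2 := real_inner_self_eq_norm_sq e_u
  -- key equality
  have hC : lam * ‖e_d‖ ^ 2 + ‖e_u‖ ^ 2 = r_u e_u + r_p e_y - r_y e_p := by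
    have ha := h2 e_y
    have hb' := h3 e_p
    have hc := h1 e_u
    rw [hiny] at ha
    rw [hinu] at hc
    linarith
  -- operator norm bounds
  have hru : |r_u e_u| ≤ ‖r_u‖ * ‖e_u‖ := by
    simpa [Real.norm_eq_abs] using r_u.le_opNorm e_u
  have hrpy : |r_p e_y| ≤ ‖r_p‖ * ‖e_y‖ := by
    simpa [Real.norm_eq_abs] using r_p.le_opNorm e_y
  have hryp : |r_y e_p| ≤ ‖r_y‖ * ‖e_p‖ := by
    simpa [Real.norm_eq_abs] using r_y.le_opNorm e_p
  have hryy : |r_y e_y| ≤ ‖r_y‖ * ‖e_y‖ := by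
    simpa [Real.norm_eq_abs] using r_y.le_opNorm e_y
  have hrpp : |r_p e_p| ≤ ‖r_p‖ * ‖e_p‖ := by
    simpa [Real.norm_eq_abs] using r_p.le_opNorm e_p
  -- inequality C
  have hCle : lam * ‖e_d‖ ^ 2 + ‖e_u‖ ^ 2 ≤
      ‖r_u‖ * ‖e_u‖ + ‖r_p‖ * ‖e_y‖ + ‖r_y‖ * ‖e_p‖ := by
    have h1' := le_abs_self (r_u e_u)
    have h2' := le_abs_self (r_p e_y)
    have h3' := neg_abs_le (r_y e_p)
    linarith
  -- coercivity bounds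
  have hA : α * ‖e_y‖ ^ 2 ≤ (γb * ‖e_u‖ + ‖r_y‖) * ‖e_y‖ := by
    have hco := hcoer e_y
    have h3' := h3 e_y
    have hb1 := (abs_le.mp (hb e_u e_y)).2
    have hr := le_abs_self (r_y e_y)
    nlinarith
  have hB : α * ‖e_p‖ ^ 2 ≤ (lam * ‖e_d‖ + ‖r_p‖) * ‖e_p‖ := by
    have hco := hcoer e_p
    have h2' := h2 e_p
    have hi : (inner ℝ e_d e_p : ℝ) ≤ ‖e_d‖ * ‖e_p‖ := real_inner_le_norm _ _
    have hr := le_abs_self (r_p e_p)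
    nlinarith
  -- ‖e_d‖ ≤ ‖e_y‖
  have hD : ‖e_d‖ ≤ ‖e_y‖ := by
    have hsq : ‖e_d‖ ^ 2 ≤ ‖e_d‖ * ‖e_y‖ := by
      calc ‖e_d‖ ^ 2 = -(inner ℝ e_d e_y : ℝ) := by rw [hiny]; ring
        _ ≤ |(inner ℝ e_d e_y : ℝ)| := neg_le_abs _
        _ ≤ ‖e_d‖ * ‖e_y‖ := abs_real_inner_le_norm _ _
    nlinarith [norm_nonneg e_d, norm_nonneg e_y]
  rcases eq_or_lt_of_le (norm_nonneg e_d) with hx0 | hx0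
  · rw [← hx0]
    have := Real.sqrt_nonneg ((1 / 4) * p ^ 2 + q)
    linarith
  · -- positive case
    have hey : 0 < ‖e_y‖ := lt_of_lt_of_le hx0 hD
    have hE1 : α * ‖e_y‖ ≤ γb * ‖e_u‖ + ‖r_y‖ := by
      have hA' : (α * ‖e_y‖) * ‖e_y‖ ≤ (γb * ‖e_u‖ + ‖r_y‖) * ‖e_y‖ := by
        calc (α * ‖e_y‖) * ‖e_y‖ = α * ‖e_y‖ ^ 2 := by ring
          _ ≤ _ := hA
      exact le_of_mul_le_mul_right hA' hey
    have hE2 : α * ‖e_p‖ ≤ lam * ‖e_d‖ + ‖r_p‖ := by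
      rcases eq_or_lt_of_le (norm_nonneg e_p) with hp0' | hp0'
      · rw [← hp0']
        have : 0 < lam * ‖e_d‖ := mul_pos hlam hx0
        nlinarith [norm_nonneg r_p]
      · have hB' : (α * ‖e_p‖) * ‖e_p‖ ≤ (lam * ‖e_d‖ + ‖r_p‖) * ‖e_p‖ := by
          calc (α * ‖e_p‖) * ‖e_p‖ = α * ‖e_p‖ ^ 2 := by ring
            _ ≤ _ := hB
        exact le_of_mul_le_mul_right hB' hp0'
    -- combine, multiplied by α²
    have hF1 : α * ‖r_p‖ * (α * ‖e_y‖) ≤ α * ‖r_p‖ * (γb * ‖e_u‖ + ‖r_y‖) :=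
      mul_le_mul_of_nonneg_left hE1 (by positivity)
    have hF2 : α * ‖r_y‖ * (α * ‖e_p‖) ≤ α * ‖r_y‖ * (lam * ‖e_d‖ + ‖r_p‖) :=
      mul_le_mul_of_nonneg_left hE2 (by positivity)
    have hF3 : α ^ 2 * (lam * ‖e_d‖ ^ 2 + ‖e_u‖ ^ 2) ≤
        α ^ 2 * (‖r_u‖ * ‖e_u‖ + ‖r_p‖ * ‖e_y‖ + ‖r_y‖ * ‖e_p‖) :=
      mul_le_mul_of_nonneg_left hCle (by positivity)
    have hYoung : α * (α * ‖r_u‖ + γb * ‖r_p‖) * ‖e_u‖ ≤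
        α ^ 2 * ‖e_u‖ ^ 2 + (1 / 4) * (α * ‖r_u‖ + γb * ‖r_p‖) ^ 2 := by
      nlinarith [sq_nonneg (α * ‖e_u‖ - (α * ‖r_u‖ + γb * ‖r_p‖) / 2)]
    have hQm : lam * α ^ 2 * ‖e_d‖ ^ 2 ≤
        lam * α * ‖r_y‖ * ‖e_d‖ + (2 * α * ‖r_p‖ * ‖r_y‖ +
          (1 / 4) * (α * ‖r_u‖ + γb * ‖r_p‖) ^ 2) := by
      linarith [hF1, hF2, hF3, hYoung]
    -- rewrite as x² ≤ p x + q
    have hpos : (0:ℝ) < lam * α ^ 2 := by positivity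
    have hq : ‖e_d‖ ^ 2 ≤ p * ‖e_d‖ + q := by
      have h2' : (p * ‖e_d‖ + q) * (lam * α ^ 2) =
          lam * α * ‖r_y‖ * ‖e_d‖ + (2 * α * ‖r_p‖ * ‖r_y‖ +
            (1 / 4) * (α * ‖r_u‖ + γb * ‖r_p‖) ^ 2) := by
        rw [hp, hqdef]
        field_simp
      have h3' : ‖e_d‖ ^ 2 * (lam * α ^ 2) ≤ (p * ‖e_d‖ + q) * (lam * α ^ 2) := by
        rw [h2']; linarith [hQm]
      exact le_of_mul_le_mul_right h3' hpos
    have h4' : (‖e_d‖ - p / 2) ^ 2 ≤ p ^ 2 / 4 + q := by nlinarith [hq]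
    have h5' : ‖e_d‖ - p / 2 ≤ Real.sqrt (p ^ 2 / 4 + q) := by
      calc ‖e_d‖ - p / 2 ≤ |‖e_d‖ - p / 2| := le_abs_self _
        _ = Real.sqrt ((‖e_d‖ - p / 2) ^ 2) := (Real.sqrt_sq_eq_abs _).symm
        _ ≤ _ := Real.sqrt_le_sqrt h4'
    have heq : (1 / 4) * p ^ 2 + q = p ^ 2 / 4 + q := by ring
    rw [heq]
    linarith
end
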